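/- Let τ be a nonempty finite type, n : ℕ, and r : List τ → ℝ. Suppose V : List τ → ℝ satisfies the local max constraint and the boundary condition for r, and let y* be a list over τ of length n such that r y* ≥ r y for every list y over τ of length n. Then for every i ≤ n, V (y*.take i) = max over all lists y over τ of length n of r y; that is, every prefix of an optimal full sequence attains the globally maximal reward as its value. -/

import Mathlib

/-- `V` satisfies the local max constraint: for every list `s` over `τ` with
`s.length < n`, `V s` equals the maximum over tokens `t : τ` of `V (s ++ [t])`. -/
def LocalMaxConstraint {τ : Type*} [Fintype τ] [Nonempty τ] (n : ℕ) (V : List τ → ℝ) : Prop :=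
  ∀ s : List τ, s.length < n →
    V s = Finset.univ.sup' Finset.univ_nonempty (fun t : τ => V (s ++ [t]))

/-- `V` satisfies the boundary condition for `r`: `V y = r y` for every
full sequence `y` (list of length `n`). -/
def BoundaryCondition {τ : Type*} (n : ℕ) (r V : List τ → ℝ) : Prop :=
  ∀ y : List τ, y.length = n → V y = r y

/-- If `V` satisfies the local max constraint and the boundary condition for `r`, and
`y*` is an optimal full sequence, then every prefix `y*.take i` (`i ≤ n`) attains as its
value the globally maximal reward over all full sequences of length `n` (lists of
length `n` are enumerated as `List.ofFn y` for `y : Fin n → τ`). -/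
theorem prefix_of_optimal_attains_max_reward {τ : Type*} [Fintype τ] [Nonempty τ]
    (n : ℕ) (r V : List τ → ℝ)
    (hmax : LocalMaxConstraint n V) (hbd : BoundaryCondition n r V)
    (ystar : List τ) (hlen : ystar.length = n)
    (hopt : ∀ y : List τ, y.length = n → r y ≤ r ystar) :
    ∀ i ≤ n, V (ystar.take i) =
      Finset.univ.sup' Finset.univ_nonempty (fun y : Fin n → τ => r (List.ofFn y)) := by
  -- The sup equals r ystar
  have hsup : Finset.univ.sup' Finset.univ_nonempty
      (fun y : Fin n → τ => r (List.ofFn y)) = r ystar := by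
    subst hlen
    apply le_antisymm
    · exact Finset.sup'_le _ _ fun y _ => hopt _ List.length_ofFn
    · have := Finset.le_sup' (f := fun y : Fin ystar.length → τ => r (List.ofFn y))
        (b := ystar.get) (Finset.mem_univ _)
      simp only [List.ofFn_get] at this; exact this
  -- Upper bound: V s ≤ r ystar for all s with length ≤ n
  have hub : ∀ k s, s.length ≤ n → n - s.length ≤ k → V s ≤ r ystar := by
    intro k
    induction k with
    | zero =>
      intro s hs hk
      have : s.length = n := le_antisymm hs (by omega)
      rw [hbd s this]; exact hopt s this
    | succ k ih =>
      intro s hs hk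
      rcases eq_or_lt_of_le hs with h | h
      · rw [hbd s h]; exact hopt s h
      · rw [hmax s h]
        apply Finset.sup'_le
        intro t _
        apply ih
        · simpa using h
        · simp; omega
  -- Downward induction: V (ystar.take (n - j)) = r ystar
  have key : ∀ j ≤ n, V (ystar.take (n - j)) = r ystar := by
    intro j
    induction j with
    | zero =>
      intro _
      simp only [Nat.sub_zero, ← hlen, List.take_length]
      rw [hbd ystar hlen]
    | succ j ih =>
      intro hj
      set i := n - (j + 1) with hi
      have hiltn : i < n := by omega
      have hilen : (ystar.take i).length = i := by
        rw [List.length_take]; omega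
      rw [hmax _ (by rw [hilen]; exact hiltn)]
      apply le_antisymm
      · apply Finset.sup'_le
        intro t _
        apply hub n
        · simp [hilen]; omega
        · omega
      · have hgt : i < ystar.length := by omega
        have happ : ystar.take i ++ [ystar.get ⟨i, hgt⟩] = ystar.take (i + 1) := by
          rw [List.take_succ]
          simp [List.getElem?_eq_getElem hgt]
        have hni : n - j = i + 1 := by omega
        calc r ystar = V (ystar.take (n - j)) := (ih (by omega)).symm
          _ = V (ystar.take i ++ [ystar.get ⟨i, hgt⟩]) := by rw [happ, hni]
          _ ≤ _ := Finset.le_sup' (fun t : τ => V (List.take i ystar ++ [t]))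
              (Finset.mem_univ (ystar.get ⟨i, hgt⟩))
  intro i hi
  rw [hsup]
  have := key (n - i) (by omega)
  rwa [Nat.sub_sub_self hi] at this
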